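/- Let A be a finite nonempty alphabet. If L₁ is Π₁_{d₁}[Reg]-definable and L₂ is Π₁_{d₂}[Reg]-definable, then L₁ ∩ L₂ and L₁ ∪ L₂ are each Π₁_d[Reg]-definable for some d ≥ 1 (indeed one may take d = d₁ + d₂). -/

import Mathlib

def NumPredEncoding {d : ℕ} (N : (Fin d → ℕ) → ℕ → Prop) :
    Language (Finset (Fin d)) :=
  {u | ∃ p : Fin d → Fin u.length,
    (∀ j : Fin d, ∀ q : Fin u.length, j ∈ u.get q ↔ q = p j) ∧
    N (fun j => (p j : ℕ)) u.length}

def IsRegularNumPred {d : ℕ} (N : (Fin d → ℕ) → ℕ → Prop) : Prop :=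
  (NumPredEncoding N).IsRegular

def Pi1RegDefinable (A : Type*) (d : ℕ) (L : Set (List A)) : Prop :=
  ∃ N : (Fin d → A) → (Fin d → ℕ) → ℕ → Prop,
    (∀ a : Fin d → A, IsRegularNumPred (N a)) ∧
    ∀ w : List A, w ∈ L ↔ ∀ i : Fin d → Fin w.length,
      N (fun j => w.get (i j)) (fun j => (i j : ℕ)) w.length


section Pi1Aux

lemma regular_inter' {α : Type} {L₁ L₂ : Language α} (h₁ : L₁.IsRegular) (h₂ : L₂.IsRegular) :
    Language.IsRegular {u | u ∈ L₁ ∧ u ∈ L₂} := by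
  obtain ⟨σ₁, i₁, M₁, rfl⟩ := h₁
  obtain ⟨σ₂, i₂, M₂, rfl⟩ := h₂
  refine ⟨σ₁ × σ₂, inferInstance,
    ⟨fun s a => (M₁.step s.1 a, M₂.step s.2 a), (M₁.start, M₂.start),
      {s | s.1 ∈ M₁.accept ∧ s.2 ∈ M₂.accept}⟩, ?_⟩
  have key : ∀ (x : List α) (s : σ₁ × σ₂),
      DFA.evalFrom ⟨fun s a => (M₁.step s.1 a, M₂.step s.2 a), (M₁.start, M₂.start),
        {s | s.1 ∈ M₁.accept ∧ s.2 ∈ M₂.accept}⟩ s x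
        = (M₁.evalFrom s.1 x, M₂.evalFrom s.2 x) := by
    intro x
    induction x with
    | nil => intro s; rfl
    | cons a x ih => intro s; exact ih _
  ext x
  simp [DFA.mem_accepts, DFA.eval, key]
  rfl

lemma regular_union' {α : Type} {L₁ L₂ : Language α} (h₁ : L₁.IsRegular) (h₂ : L₂.IsRegular) :
    Language.IsRegular {u | u ∈ L₁ ∨ u ∈ L₂} := by
  obtain ⟨σ₁, i₁, M₁, rfl⟩ := h₁
  obtain ⟨σ₂, i₂, M₂, rfl⟩ := h₂
  refine ⟨σ₁ × σ₂, inferInstance,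
    ⟨fun s a => (M₁.step s.1 a, M₂.step s.2 a), (M₁.start, M₂.start),
      {s | s.1 ∈ M₁.accept ∨ s.2 ∈ M₂.accept}⟩, ?_⟩
  have key : ∀ (x : List α) (s : σ₁ × σ₂),
      DFA.evalFrom ⟨fun s a => (M₁.step s.1 a, M₂.step s.2 a), (M₁.start, M₂.start),
        {s | s.1 ∈ M₁.accept ∨ s.2 ∈ M₂.accept}⟩ s x
        = (M₁.evalFrom s.1 x, M₂.evalFrom s.2 x) := by
    intro x
    induction x with
    | nil => intro s; rfl
    | cons a x ih => intro s; exact ih _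
  ext x
  simp [DFA.mem_accepts, DFA.eval, key]
  rfl

lemma regular_comap' {α β : Type} (f : α → β) {L : Language β} (h : L.IsRegular) :
    Language.IsRegular {u : List α | u.map f ∈ L} := by
  obtain ⟨σ, i, M, rfl⟩ := h
  refine ⟨σ, i, ⟨fun s a => M.step s (f a), M.start, M.accept⟩, ?_⟩
  have key : ∀ (x : List α) (s : σ),
      DFA.evalFrom ⟨fun s a => M.step s (f a), M.start, M.accept⟩ s x
        = M.evalFrom s (x.map f) := by
    intro x
    induction x with
    | nil => intro s; rfl
    | cons a x ih => intro s; exact ih _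
  ext x
  simp [DFA.mem_accepts, DFA.eval, key]
  rfl

lemma countP_eq_one_iff' {α : Type} (p : α → Bool) :
    ∀ (l : List α), l.countP p = 1 ↔ ∃! i : Fin l.length, p (l.get i)
  | [] => by
    simp only [List.countP_nil]
    constructor
    · omega
    · rintro ⟨i, _⟩; exact absurd i.2 (by simp)
  | a :: t => by
    rw [List.countP_cons]
    simp only [List.length_cons]
    by_cases h : p a
    · rw [if_pos h]
      have heq : t.countP p + 1 = 1 ↔ t.countP p = 0 := by omega
      rw [heq, List.countP_eq_zero]
      constructor
      · intro hz
        refine ⟨0, by simpa using h, ?_⟩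
        intro i
        induction i using Fin.cases with
        | zero => intro _; rfl
        | succ k =>
          intro hk
          exact absurd hk (by simpa using hz (t.get k) (List.get_mem t k))
      · rintro ⟨i, hi, huniq⟩ x hx
        obtain ⟨k, rfl⟩ := List.mem_iff_get.mp hx
        intro hk
        have h0 : (0 : Fin (t.length + 1)) = i := huniq 0 (by simpa using h)
        have hs : (k.succ : Fin (t.length + 1)) = i := huniq k.succ (by simpa using hk)
        exact (Fin.succ_ne_zero k) (hs.trans h0.symm)
    · rw [if_neg h, Nat.add_zero, countP_eq_one_iff' p t]
      constructor
      · rintro ⟨k, hk, huniq⟩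
        refine ⟨k.succ, by simpa using hk, ?_⟩
        intro i
        induction i using Fin.cases with
        | zero => intro h0; exact absurd h0 (by simpa using h)
        | succ k' =>
          intro hk'
          simpa using congrArg Fin.succ (huniq k' (by simpa using hk'))
      · rintro ⟨i, hi, huniq⟩
        induction i using Fin.cases with
        | zero => exact absurd hi (by simpa using h)
        | succ k =>
          exact ⟨k, by simpa using hi, fun k' hk' =>
            Fin.succ_injective _ (huniq k'.succ (by simpa using hk'))⟩

lemma markers_iff' {d : ℕ} (u : List (Finset (Fin d))) :
    (∃ p : Fin d → Fin u.length, ∀ j : Fin d, ∀ q : Fin u.length, j ∈ u.get q ↔ q = p j) ↔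
      ∀ j : Fin d, u.countP (fun S => decide (j ∈ S)) = 1 := by
  constructor
  · rintro ⟨p, hp⟩ j
    rw [countP_eq_one_iff']
    exact ⟨p j, by simpa using (hp j (p j)).mpr rfl, fun q hq => (hp j q).mp (by simpa using hq)⟩
  · intro h
    have h' : ∀ j, ∃! q : Fin u.length, j ∈ u.get q := by
      intro j
      have := (countP_eq_one_iff' _ u).mp (h j)
      simpa using this
    choose p hp huniq using h'
    exact ⟨p, fun j q => ⟨fun hq => huniq j q hq, fun hq => hq ▸ hp j⟩⟩

def incF : Fin 3 → Fin 3 := fun x => if x = 0 then 1 else 2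

def onceDFA (d : ℕ) : DFA (Finset (Fin d)) (Fin d → Fin 3) where
  step s S := fun j => if j ∈ S then incF (s j) else s j
  start := fun _ => 0
  accept := {s | ∀ j, s j = 1}

lemma onceDFA_evalFrom {d : ℕ} (u : List (Finset (Fin d))) :
    ∀ s, (onceDFA d).evalFrom s u
      = fun j => incF^[u.countP (fun S => decide (j ∈ S))] (s j) := by
  induction u with
  | nil => intro s; simp [DFA.evalFrom]
  | cons S u ih =>
    intro s
    rw [show (onceDFA d).evalFrom s (S :: u) = (onceDFA d).evalFrom ((onceDFA d).step s S) u
      from rfl, ih]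
    funext j
    rw [List.countP_cons]
    by_cases h : j ∈ S
    · simp [onceDFA, h, Function.iterate_succ_apply]
    · simp [onceDFA, h]

lemma incF_iter (n : ℕ) : incF^[n] (0 : Fin 3) = 1 ↔ n = 1 := by
  have key : ∀ m : ℕ, incF^[m] (0 : Fin 3) = if m = 0 then 0 else if m = 1 then 1 else 2 := by
    intro m
    induction m with
    | zero => simp
    | succ m ih =>
      rw [Function.iterate_succ_apply', ih]
      match m with
      | 0 => decide
      | 1 => decide
      | (k+2) => simp [incF]
  rw [key]
  match n with
  | 0 => simp
  | 1 => simp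
  | (k+2) => simp

lemma trivEnc_regular' (d : ℕ) :
    (NumPredEncoding (fun (_ : Fin d → ℕ) (_ : ℕ) => True)).IsRegular := by
  refine ⟨Fin d → Fin 3, inferInstance, onceDFA d, ?_⟩
  ext u
  rw [DFA.mem_accepts, DFA.eval, onceDFA_evalFrom]
  have hs : (onceDFA d).start = fun _ => 0 := rfl
  rw [hs]
  show (∀ j, incF^[List.countP (fun S => decide (j ∈ S)) u] 0 = 1) ↔ _
  simp only [incF_iter]
  rw [show (u ∈ NumPredEncoding (fun (_ : Fin d → ℕ) (_ : ℕ) => True)) ↔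
    (∃ p : Fin d → Fin u.length, ∀ j : Fin d, ∀ q : Fin u.length, j ∈ u.get q ↔ q = p j) from
    ⟨fun ⟨p, hp, _⟩ => ⟨p, hp⟩, fun ⟨p, hp⟩ => ⟨p, hp, trivial⟩⟩]
  rw [markers_iff']

def projL (d₁ d₂ : ℕ) (S : Finset (Fin (d₁ + d₂))) : Finset (Fin d₁) :=
  Finset.univ.filter (fun j => Fin.castAdd d₂ j ∈ S)

def projR (d₁ d₂ : ℕ) (S : Finset (Fin (d₁ + d₂))) : Finset (Fin d₂) :=
  Finset.univ.filter (fun j => Fin.natAdd d₁ j ∈ S)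

lemma enc_split {d₁ d₂ : ℕ} (Q₁ : (Fin d₁ → ℕ) → ℕ → Prop) (Q₂ : (Fin d₂ → ℕ) → ℕ → Prop) :
    NumPredEncoding (fun p n => Q₁ (fun j => p (Fin.castAdd d₂ j)) n ∧
        Q₂ (fun j => p (Fin.natAdd d₁ j)) n)
      = {u | u.map (projL d₁ d₂) ∈ NumPredEncoding Q₁ ∧
             u.map (projR d₁ d₂) ∈ NumPredEncoding Q₂} := by
  ext u
  constructor
  · rintro ⟨p, hp, hQ₁, hQ₂⟩
    constructor
    · refine ⟨fun j => Fin.cast (List.length_map (f := _) : (List.map _ u).length = u.length).symm (p (Fin.castAdd d₂ j)), ?_, ?_⟩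
      · intro j q
        have hq : (q : ℕ) < u.length := by simpa using q.2
        have hget : (u.map (projL d₁ d₂)).get q = projL d₁ d₂ (u.get ⟨q, hq⟩) := by
          simp [List.get_eq_getElem, List.getElem_map]
        rw [hget]
        simp only [projL, Finset.mem_filter, Finset.mem_univ, true_and]
        rw [hp (Fin.castAdd d₂ j) ⟨q, hq⟩, Fin.ext_iff, Fin.ext_iff]
        simp
      · simpa only [List.length_map, Fin.val_cast] using hQ₁
    · refine ⟨fun j => Fin.cast (List.length_map (f := _) : (List.map _ u).length = u.length).symm (p (Fin.natAdd d₁ j)), ?_, ?_⟩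
      · intro j q
        have hq : (q : ℕ) < u.length := by simpa using q.2
        have hget : (u.map (projR d₁ d₂)).get q = projR d₁ d₂ (u.get ⟨q, hq⟩) := by
          simp [List.get_eq_getElem, List.getElem_map]
        rw [hget]
        simp only [projR, Finset.mem_filter, Finset.mem_univ, true_and]
        rw [hp (Fin.natAdd d₁ j) ⟨q, hq⟩, Fin.ext_iff, Fin.ext_iff]
        simp
      · simpa only [List.length_map, Fin.val_cast] using hQ₂
  · rintro ⟨⟨p₁, hp₁, hQ₁⟩, ⟨p₂, hp₂, hQ₂⟩⟩
    refine ⟨Fin.addCases (fun j => Fin.cast (List.length_map (f := _) : (List.map _ u).length = u.length) (p₁ j))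
      (fun j => Fin.cast (List.length_map (f := _) : (List.map _ u).length = u.length) (p₂ j)), ?_, ?_, ?_⟩
    · intro j q
      induction j using Fin.addCases with
      | left j =>
        simp only [Fin.addCases_left]
        have hq : (q : ℕ) < (u.map (projL d₁ d₂)).length := by simpa using q.2
        have hmem : Fin.castAdd d₂ j ∈ u.get q ↔ j ∈ (u.map (projL d₁ d₂)).get ⟨q, hq⟩ := by
          simp [List.get_eq_getElem, List.getElem_map, projL]
        rw [hmem, hp₁ j ⟨q, hq⟩, Fin.ext_iff, Fin.ext_iff]
        simp
      | right j =>
        simp only [Fin.addCases_right]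
        have hq : (q : ℕ) < (u.map (projR d₁ d₂)).length := by simpa using q.2
        have hmem : Fin.natAdd d₁ j ∈ u.get q ↔ j ∈ (u.map (projR d₁ d₂)).get ⟨q, hq⟩ := by
          simp [List.get_eq_getElem, List.getElem_map, projR]
        rw [hmem, hp₂ j ⟨q, hq⟩, Fin.ext_iff, Fin.ext_iff]
        simp
    · have hfun : (fun j => ((Fin.addCases (motive := fun _ => Fin u.length)
          (fun j => Fin.cast (List.length_map (f := _) : (List.map _ u).length = u.length) (p₁ j))
          (fun j => Fin.cast (List.length_map (f := _) : (List.map _ u).length = u.length) (p₂ j)) (Fin.castAdd d₂ j) : Fin u.length) : ℕ))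
          = fun j => ((p₁ j : ℕ)) := by
        funext j
        rw [Fin.addCases_left]
        simp
      rw [hfun]
      simpa only [List.length_map] using hQ₁
    · have hfun : (fun j => ((Fin.addCases (motive := fun _ => Fin u.length)
          (fun j => Fin.cast (List.length_map (f := _) : (List.map _ u).length = u.length) (p₁ j))
          (fun j => Fin.cast (List.length_map (f := _) : (List.map _ u).length = u.length) (p₂ j)) (Fin.natAdd d₁ j) : Fin u.length) : ℕ))
          = fun j => ((p₂ j : ℕ)) := by
        funext j
        rw [Fin.addCases_right]
        simp
      rw [hfun]
      simpa only [List.length_map] using hQ₂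

lemma enc_congr {d : ℕ} {R R' : (Fin d → ℕ) → ℕ → Prop} (h : ∀ p n, R p n ↔ R' p n) :
    NumPredEncoding R = NumPredEncoding R' := by
  ext u
  exact ⟨fun ⟨p, hp, hr⟩ => ⟨p, hp, (h _ _).mp hr⟩, fun ⟨p, hp, hr⟩ => ⟨p, hp, (h _ _).mpr hr⟩⟩

lemma enc_or {d : ℕ} (R S : (Fin d → ℕ) → ℕ → Prop) :
    NumPredEncoding (fun p n => R p n ∨ S p n)
      = {u | u ∈ NumPredEncoding R ∨ u ∈ NumPredEncoding S} := by
  ext u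
  constructor
  · rintro ⟨p, hp, h | h⟩
    · exact Or.inl ⟨p, hp, h⟩
    · exact Or.inr ⟨p, hp, h⟩
  · rintro (⟨p, hp, h⟩ | ⟨p, hp, h⟩)
    · exact ⟨p, hp, Or.inl h⟩
    · exact ⟨p, hp, Or.inr h⟩

lemma forall_split_and {n d₁ d₂ : ℕ} (h₁ : 1 ≤ d₁) (h₂ : 1 ≤ d₂)
    (P : (Fin d₁ → Fin n) → Prop) (Q : (Fin d₂ → Fin n) → Prop) :
    (∀ i : Fin (d₁ + d₂) → Fin n,
        P (fun j => i (Fin.castAdd d₂ j)) ∧ Q (fun j => i (Fin.natAdd d₁ j)))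
      ↔ (∀ i₁, P i₁) ∧ (∀ i₂, Q i₂) := by
  constructor
  · intro h
    constructor
    · intro i₁
      have := (h (Fin.addCases i₁ (fun _ => i₁ ⟨0, h₁⟩))).1
      simpa only [Fin.addCases_left] using this
    · intro i₂
      have := (h (Fin.addCases (fun _ => i₂ ⟨0, h₂⟩) i₂)).2
      simpa only [Fin.addCases_right] using this
  · rintro ⟨hP, hQ⟩ i
    exact ⟨hP _, hQ _⟩

lemma forall_split_or {n d₁ d₂ : ℕ}
    (P : (Fin d₁ → Fin n) → Prop) (Q : (Fin d₂ → Fin n) → Prop) :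
    (∀ i : Fin (d₁ + d₂) → Fin n,
        P (fun j => i (Fin.castAdd d₂ j)) ∨ Q (fun j => i (Fin.natAdd d₁ j)))
      ↔ (∀ i₁, P i₁) ∨ (∀ i₂, Q i₂) := by
  constructor
  · intro h
    by_cases hP : ∀ i₁, P i₁
    · exact Or.inl hP
    · right
      push_neg at hP
      obtain ⟨i₁, hi₁⟩ := hP
      intro i₂
      rcases h (Fin.addCases i₁ i₂) with hp | hq
      · exact absurd (by simpa only [Fin.addCases_left] using hp) hi₁
      · simpa only [Fin.addCases_right] using hq
  · rintro (hP | hQ) i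
    · exact Or.inl (hP _)
    · exact Or.inr (hQ _)

end Pi1Aux

theorem pi1Reg_inter_union (A : Type) [Fintype A] [Nonempty A] (d₁ d₂ : ℕ)
    (h₁ : 1 ≤ d₁) (h₂ : 1 ≤ d₂) (L₁ L₂ : Set (List A))
    (hL₁ : Pi1RegDefinable A d₁ L₁) (hL₂ : Pi1RegDefinable A d₂ L₂) :
    Pi1RegDefinable A (d₁ + d₂) (L₁ ∩ L₂) ∧ Pi1RegDefinable A (d₁ + d₂) (L₁ ∪ L₂) := by
  obtain ⟨N₁, hreg₁, hdef₁⟩ := hL₁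
  obtain ⟨N₂, hreg₂, hdef₂⟩ := hL₂
  constructor
  · refine ⟨fun a p n =>
      N₁ (fun j => a (Fin.castAdd d₂ j)) (fun j => p (Fin.castAdd d₂ j)) n ∧
      N₂ (fun j => a (Fin.natAdd d₁ j)) (fun j => p (Fin.natAdd d₁ j)) n, ?_, ?_⟩
    · intro a
      unfold IsRegularNumPred
      rw [enc_split]
      exact regular_inter' (regular_comap' _ (hreg₁ _)) (regular_comap' _ (hreg₂ _))
    · intro w
      rw [Set.mem_inter_iff, hdef₁ w, hdef₂ w]
      exact (forall_split_and h₁ h₂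
        (fun i₁ => N₁ (fun j => w.get (i₁ j)) (fun j => ((i₁ j : ℕ))) w.length)
        (fun i₂ => N₂ (fun j => w.get (i₂ j)) (fun j => ((i₂ j : ℕ))) w.length)).symm
  · refine ⟨fun a p n =>
      N₁ (fun j => a (Fin.castAdd d₂ j)) (fun j => p (Fin.castAdd d₂ j)) n ∨
      N₂ (fun j => a (Fin.natAdd d₁ j)) (fun j => p (Fin.natAdd d₁ j)) n, ?_, ?_⟩
    · intro a
      unfold IsRegularNumPred
      rw [enc_or]
      have e₁ : NumPredEncoding
          (fun p n => N₁ (fun j => a (Fin.castAdd d₂ j)) (fun j => p (Fin.castAdd d₂ j)) n)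
          = NumPredEncoding (fun p n =>
              N₁ (fun j => a (Fin.castAdd d₂ j)) (fun j => p (Fin.castAdd d₂ j)) n ∧
              (fun (_ : Fin d₂ → ℕ) (_ : ℕ) => True) (fun j => p (Fin.natAdd d₁ j)) n) :=
        enc_congr (fun p n => by simp)
      have e₂ : NumPredEncoding
          (fun p n => N₂ (fun j => a (Fin.natAdd d₁ j)) (fun j => p (Fin.natAdd d₁ j)) n)
          = NumPredEncoding (fun p n =>
              (fun (_ : Fin d₁ → ℕ) (_ : ℕ) => True) (fun j => p (Fin.castAdd d₂ j)) n ∧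
              N₂ (fun j => a (Fin.natAdd d₁ j)) (fun j => p (Fin.natAdd d₁ j)) n) :=
        enc_congr (fun p n => by simp)
      have hs₁ := enc_split (N₁ (fun j => a (Fin.castAdd d₂ j)))
        (fun (_ : Fin d₂ → ℕ) (_ : ℕ) => True)
      have hs₂ := enc_split (fun (_ : Fin d₁ → ℕ) (_ : ℕ) => True)
        (N₂ (fun j => a (Fin.natAdd d₁ j)))
      rw [e₁, e₂, hs₁, hs₂]
      exact regular_union'
        (regular_inter' (regular_comap' _ (hreg₁ _)) (regular_comap' _ (trivEnc_regular' d₂)))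
        (regular_inter' (regular_comap' _ (trivEnc_regular' d₁)) (regular_comap' _ (hreg₂ _)))
    · intro w
      rw [Set.mem_union, hdef₁ w, hdef₂ w]
      exact (forall_split_or
        (fun i₁ => N₁ (fun j => w.get (i₁ j)) (fun j => ((i₁ j : ℕ))) w.length)
        (fun i₂ => N₂ (fun j => w.get (i₂ j)) (fun j => ((i₂ j : ℕ))) w.length)).symm
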